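/- A Kuratowski linear ordering L₁ is an initial segment of a Kuratowski linear ordering L₂ if and only if L₁ ⊆ L₂. -/

import Mathlib

/-- `L` is a Kuratowski linear ordering. -/
def IsKuratowskiLO {α : Type*} (L : Set (Set α)) : Prop :=
  L.Finite ∧
  ∅ ∉ L ∧
  (L.Nonempty → ∃ a : α, {a} ∈ L) ∧
  (∀ x ∈ L, x = ⋃₀ L ∨ ∃ y ∈ ⋃₀ L, y ∉ x ∧ x ∪ {y} ∈ L) ∧
  (∀ x ∈ L, ∀ y ∈ L, x ⊆ y ∨ y ⊆ x)

/-- The strict order on the field of a Kuratowski linear ordering: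
`a <_L b` iff some member of `L` contains `a` but not `b`. -/
def KurLt {α : Type*} (L : Set (Set α)) (a b : α) : Prop :=
  ∃ x ∈ L, a ∈ x ∧ b ∉ x

/-- `L₁` is an initial segment of `L₂`: `L₁` is a Kuratowski linear ordering,
its field is contained in that of `L₂`, its order is the restriction of the
order of `L₂`, and its field is downward closed under `<_{L₂}`. -/
def IsInitialSegment {α : Type*} (L₁ L₂ : Set (Set α)) : Prop :=
  IsKuratowskiLO L₁ ∧
  ⋃₀ L₁ ⊆ ⋃₀ L₂ ∧
  (∀ a ∈ ⋃₀ L₁, ∀ b ∈ ⋃₀ L₁, (KurLt L₁ a b ↔ KurLt L₂ a b)) ∧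
  (∀ a ∈ ⋃₀ L₁, ∀ b, KurLt L₂ b a → b ∈ ⋃₀ L₁)

lemma kur_exists_maximal_wrt {β γ : Type*} [PartialOrder γ] (f : β → γ) (s : Set β)
    (h : s.Finite) (hs : s.Nonempty) : ∃ a ∈ s, ∀ a' ∈ s, f a ≤ f a' → f a = f a' := by
  obtain ⟨a, ha, hmax⟩ := h.exists_maximalFor f s hs
  exact ⟨a, ha, fun a' ha' hle => le_antisymm hle (hmax ha' hle)⟩

lemma kur_exists_minimal_wrt {β γ : Type*} [PartialOrder γ] (f : β → γ) (s : Set β)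
    (h : s.Finite) (hs : s.Nonempty) : ∃ a ∈ s, ∀ a' ∈ s, f a' ≤ f a → f a = f a' := by
  obtain ⟨a, ha, hmin⟩ := h.exists_minimalFor f s hs
  exact ⟨a, ha, fun a' ha' hle => le_antisymm (hmin ha' hle) hle⟩

section KurAux

variable {α : Type*}

/-- In a nonempty Kuratowski linear ordering, the union of the family is a member. -/
lemma kur_sUnion_mem {L : Set (Set α)} (h : IsKuratowskiLO L) (hne : L.Nonempty) :
    ⋃₀ L ∈ L := by
  obtain ⟨hfin, -, -, hsucc, -⟩ := h
  obtain ⟨m, hmL, hmax⟩ := kur_exists_maximal_wrt id L hfin hne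
  rcases hsucc m hmL with h1 | ⟨y, -, hy, hmy⟩
  · rwa [← h1]
  · have := hmax _ hmy Set.subset_union_left
    simp only [id_eq] at this
    exact absurd (this ▸ (Set.mem_union_right m rfl : y ∈ m ∪ {y})) hy

/-- Structure lemma: each member of a Kuratowski LO is either a singleton or
the union of a member `t` with one extra point, where `t` contains every member
properly contained in `s`. -/
lemma kur_key {L : Set (Set α)} (h : IsKuratowskiLO L) {s : Set α} (hs : s ∈ L) :
    (∃ a, s = {a}) ∨
      ∃ t ∈ L, ∃ y, y ∉ t ∧ s = t ∪ {y} ∧ ∀ u ∈ L, u ⊂ s → u ⊆ t := by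
  obtain ⟨hfin, hemp, hsing, hsucc, hchain⟩ := h
  by_cases hP : ∃ t ∈ L, t ⊂ s
  · -- there is a proper predecessor; take a maximal one
    obtain ⟨t0, ht0L, ht0s⟩ := hP
    have hPfin : {t | t ∈ L ∧ t ⊂ s}.Finite := hfin.subset (fun u hu => hu.1)
    obtain ⟨t, ⟨htL, hts⟩, hmax⟩ :=
      kur_exists_maximal_wrt id _ hPfin ⟨t0, ht0L, ht0s⟩
    -- t is not the whole union
    have htU : t ≠ ⋃₀ L := by
      intro he
      exact hts.2 (he ▸ Set.subset_sUnion_of_mem hs)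
    rcases hsucc t htL with h1 | ⟨y, -, hyt, hty⟩
    · exact absurd h1 htU
    · -- s = t ∪ {y}
      have hse : s = t ∪ {y} := by
        rcases hchain (t ∪ {y}) hty s hs with hsub | hsub
        · by_cases hss : s ⊆ t ∪ {y}
          · exact Set.Subset.antisymm hss hsub
          · have : t ∪ {y} ⊂ s := ⟨hsub, fun hc => hss hc⟩
            have h2 := hmax (t ∪ {y}) ⟨hty, this⟩ Set.subset_union_left
            simp only [id_eq] at h2
            exact absurd (h2 ▸ (Set.mem_union_right t rfl : y ∈ t ∪ {y})) hyt
        · -- s ⊆ t ∪ {y}; since t ⊂ s, the point y lies in s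
          obtain ⟨c, hcs, hct⟩ := Set.exists_of_ssubset hts
          have hcy : c = y := by
            rcases hsub hcs with hc | hc
            · exact absurd hc hct
            · exact hc
          apply Set.Subset.antisymm hsub
          exact Set.union_subset hts.1 (by simp [← hcy, hcs])
      refine Or.inr ⟨t, htL, y, hyt, hse, ?_⟩
      intro u huL hus
      rcases hchain u huL t htL with h' | h'
      · exact h'
      · exact (hmax u ⟨huL, hus⟩ h').symm.le
  · -- no proper predecessor: s is the minimum, hence a singleton
    push_neg at hP
    obtain ⟨a, haL⟩ := hsing ⟨s, hs⟩
    have hsne : s ≠ ∅ := fun he => hemp (he ▸ hs)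
    rcases hchain s hs {a} haL with h' | h'
    · rcases Set.subset_singleton_iff_eq.mp h' with he | he
      · exact absurd he hsne
      · exact Or.inl ⟨a, he⟩
    · by_cases he : ({a} : Set α) = s
      · exact Or.inl ⟨a, he.symm⟩
      · exact absurd ⟨h', fun hc => he (Set.Subset.antisymm h' hc)⟩ (hP {a} haL)

/-- Every nonempty downward-closed subset of the field of a Kuratowski LO is a member. -/
lemma kur_downward_mem {L : Set (Set α)} (h : IsKuratowskiLO L) {D : Set α}
    (hDne : D.Nonempty) (hDsub : D ⊆ ⋃₀ L)
    (hdc : ∀ c ∈ D, ∀ d, KurLt L d c → d ∈ D) : D ∈ L := by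
  have hLne : L.Nonempty := by
    obtain ⟨c, hc⟩ := hDne
    obtain ⟨x, hx, -⟩ := hDsub hc
    exact ⟨x, hx⟩
  have hU := kur_sUnion_mem h hLne
  have hfin := h.1
  -- take a minimal member of L containing D
  have hSfin : {s | s ∈ L ∧ D ⊆ s}.Finite := hfin.subset (fun u hu => hu.1)
  obtain ⟨s, ⟨hsL, hDs⟩, hmin⟩ :=
    kur_exists_minimal_wrt id _ hSfin ⟨⋃₀ L, hU, hDsub⟩
  rcases kur_key h hsL with ⟨a, rfl⟩ | ⟨t, htL, y, hyt, hse, -⟩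
  · rcases Set.subset_singleton_iff_eq.mp hDs with he | he
    · exact absurd he hDne.ne_empty
    · exact he ▸ hsL
  · -- s = t ∪ {y}; D is not contained in t
    have hDt : ¬ D ⊆ t := by
      intro hc
      have hts : t ⊆ s := hse ▸ Set.subset_union_left
      have h2 := hmin t ⟨htL, hc⟩ hts
      simp only [id_eq] at h2
      exact hyt (h2 ▸ (hse ▸ (Set.mem_union_right t rfl : y ∈ t ∪ {y}) : y ∈ s))
    obtain ⟨c, hcD, hct⟩ := Set.not_subset.mp hDt
    have hcy : c = y := by
      have := hDs hcD
      rw [hse] at this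
      rcases this with hc | hc
      · exact absurd hc hct
      · exact hc
    have htD : t ⊆ D := by
      intro d hd
      exact hdc c hcD d ⟨t, htL, hd, hcy ▸ hyt⟩
    have : D = s := by
      apply Set.Subset.antisymm hDs
      rw [hse]
      exact Set.union_subset htD (by simp [← hcy, hcD])
    exact this ▸ hsL

/-- Trichotomy for a Kuratowski LO. -/
lemma kur_trichotomy {L : Set (Set α)} (h : IsKuratowskiLO L) {a b : α}
    (ha : a ∈ ⋃₀ L) (hb : b ∈ ⋃₀ L) (hab : a ≠ b) :
    KurLt L a b ∨ KurLt L b a := by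
  have hLne : L.Nonempty := by
    obtain ⟨x, hx, -⟩ := ha
    exact ⟨x, hx⟩
  have hU := kur_sUnion_mem h hLne
  have hSfin : {s | s ∈ L ∧ a ∈ s ∧ b ∈ s}.Finite := h.1.subset (fun u hu => hu.1)
  obtain ⟨s, ⟨hsL, has, hbs⟩, hmin⟩ :=
    kur_exists_minimal_wrt id _ hSfin ⟨⋃₀ L, hU, ha, hb⟩
  rcases kur_key h hsL with ⟨c, rfl⟩ | ⟨t, htL, y, hyt, hse, -⟩
  · exact absurd (has.trans hbs.symm) hab
  · have hts : t ⊆ s := hse ▸ Set.subset_union_left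
    by_cases hat : a ∈ t
    · have hbt : b ∉ t := by
        intro hc
        have h2 := hmin t ⟨htL, hat, hc⟩ hts
        simp only [id_eq] at h2
        exact hyt (h2 ▸ (hse ▸ (Set.mem_union_right t rfl : y ∈ t ∪ {y}) : y ∈ s))
      exact Or.inl ⟨t, htL, hat, hbt⟩
    · have hay : a = y := by
        rcases (hse ▸ has : a ∈ t ∪ {y}) with hc | hc
        · exact absurd hc hat
        · exact hc
      by_cases hbt : b ∈ t
      · exact Or.inr ⟨t, htL, hbt, hay ▸ hyt⟩
      · have hby : b = y := by
          rcases (hse ▸ hbs : b ∈ t ∪ {y}) with hc | hc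
          · exact absurd hc hbt
          · exact hc
        exact absurd (hay.trans hby.symm) hab

/-- `KurLt` is asymmetric for a Kuratowski LO. -/
lemma kur_asymm {L : Set (Set α)} (h : IsKuratowskiLO L) {a b : α}
    (hab : KurLt L a b) : ¬ KurLt L b a := by
  rintro ⟨y, hyL, hby, hay⟩
  obtain ⟨x, hxL, hax, hbx⟩ := hab
  rcases h.2.2.2.2 x hxL y hyL with hs | hs
  · exact hay (hs hax)
  · exact hbx (hs hby)

end KurAux

/-- For Kuratowski linear orderings, being an initial segment coincides with
set inclusion. -/
theorem kuratowskiLO_initialSegment_iff_subset {α : Type*} (L₁ L₂ : Set (Set α))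
    (h₁ : IsKuratowskiLO L₁) (h₂ : IsKuratowskiLO L₂) :
    IsInitialSegment L₁ L₂ ↔ L₁ ⊆ L₂ := by
  constructor
  · rintro ⟨-, hfield, hord, hdc⟩ x hx
    -- x is a nonempty downward-closed subset of the field of L₂
    have hxne : x.Nonempty := by
      rcases Set.eq_empty_or_nonempty x with rfl | hne
      · exact absurd hx h₁.2.1
      · exact hne
    have hxsub₁ : x ⊆ ⋃₀ L₁ := Set.subset_sUnion_of_mem hx
    refine kur_downward_mem h₂ hxne (hxsub₁.trans hfield) ?_
    intro c hc d hdlt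
    have hc₁ : c ∈ ⋃₀ L₁ := hxsub₁ hc
    have hd₁ : d ∈ ⋃₀ L₁ := hdc c hc₁ d hdlt
    have hdlt₁ : KurLt L₁ d c := (hord d hd₁ c hc₁).mpr hdlt
    obtain ⟨z, hzL, hdz, hcz⟩ := hdlt₁
    rcases h₁.2.2.2.2 x hx z hzL with hs | hs
    · exact absurd (hs hc) hcz
    · exact hs hdz
  · intro hsub
    refine ⟨h₁, Set.sUnion_mono hsub, ?_, ?_⟩
    · intro a ha b hb
      constructor
      · rintro ⟨z, hz, haz, hbz⟩
        exact ⟨z, hsub hz, haz, hbz⟩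
      · intro hlt
        have hab : a ≠ b := by
          obtain ⟨z, -, haz, hbz⟩ := hlt
          rintro rfl; exact hbz haz
        rcases kur_trichotomy h₁ ha hb hab with h' | h'
        · exact h'
        · obtain ⟨z, hz, hbz, haz⟩ := h'
          exact absurd hlt (kur_asymm h₂ ⟨z, hsub hz, hbz, haz⟩)
    · rintro a ⟨s, hsL, has⟩ b ⟨x, hxL, hbx, hax⟩
      rcases h₂.2.2.2.2 x hxL s (hsub hsL) with hs | hs
      · exact ⟨s, hsL, hs hbx⟩
      · exact absurd (hs has) hax
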